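/- Consider the tree-like network with nodes V={0,1,2} (origin 0, destination 2) and links e1 from 0 to 2, e2 from 0 to 1, and e3, e4 from 1 to 2, with maximum flow capacities f^max_{e1}=3, f^max_{e2}=1.5, f^max_{e3}=f^max_{e4}=0.75, constant inflow λ0=2, a locally responsive distributed routing policy G, and an equilibrium density vector ρ° whose equilibrium flows are f°_{e1}=f°_{e2}=1 and f°_{e3}=f°_{e4}=0.5, so that the minimal node residual capacity is R(f°)=0.5. Then every admissible perturbation of magnitude at most 0.6 leaves the perturbed dynamical network transferring with respect to the initial density ρ°; consequently the margin of resilience satisfies γ(ρ°) ≥ 0.6 > R(f°), i.e., with finite density capacities the margin of resilience can strictly exceed the minimal node residual capacity. -/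

import Mathlib

open Filter Set Topology MeasureTheory
open scoped BigOperators ENNReal

noncomputable section

/-- A flow network: a finite directed multigraph on node set `{0, 1, ..., n}`
(origin `0`, destination `n`) in which every link `e` satisfies `σ(e) < τ(e)`. -/
structure FlowNetwork where
  n : ℕ
  npos : 0 < n
  E : Type
  fintE : Fintype E
  decE : DecidableEq E
  /-- the tail node σ(e) -/
  src : E → Fin (n + 1)
  /-- the head node τ(e) -/
  dst : E → Fin (n + 1)
  src_lt_dst : ∀ e, src e < dst e

attribute [instance] FlowNetwork.fintE FlowNetwork.decE

namespace FlowNetwork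

variable (N : FlowNetwork)

def origin : Fin (N.n + 1) := 0

def destination : Fin (N.n + 1) := Fin.last N.n

/-- E⁺_v, the set of outgoing links of a node `v` -/
def outLinks (v : Fin (N.n + 1)) : Finset N.E :=
  Finset.univ.filter fun e => N.src e = v

/-- E⁻_v, the set of incoming links of a node `v` -/
def inLinks (v : Fin (N.n + 1)) : Finset N.E :=
  Finset.univ.filter fun e => N.dst e = v

/-- `IsWalk p u w` : the list of links `p` forms a path leading from node `u` to node `w`. -/
def IsWalk : List N.E → Fin (N.n + 1) → Fin (N.n + 1) → Prop
  | [], u, w => u = w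
  | e :: p, u, w => N.src e = u ∧ IsWalk p (N.dst e) w

/-- every node lies on a path from the origin to the destination -/
def Connected : Prop :=
  ∀ v, (∃ p, N.IsWalk p N.origin v) ∧ ∃ p, N.IsWalk p v N.destination

/-- tree-like topology: the only node reachable from the origin by two distinct paths
is the destination -/
def TreeLike : Prop :=
  ∀ v p q, N.IsWalk p N.origin v → N.IsWalk q N.origin v → p ≠ q → v = N.destination

/-- `f ∈ F(λ0)`: the set of equilibrium flows for inflow `λ0`. -/
def IsEquilibriumFlow (fmax : N.E → ℝ) (lam0 : ℝ) (f : N.E → ℝ) : Prop :=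
  (∀ e, f e ∈ Icc 0 (fmax e)) ∧
  (∑ e ∈ N.outLinks N.origin, f e = lam0) ∧
  ∀ v, v ≠ N.origin → v ≠ N.destination →
    ∑ e ∈ N.outLinks v, f e = ∑ e ∈ N.inLinks v, f e

/-- an origin-destination cut -/
def IsCut (U : Finset (Fin (N.n + 1))) : Prop := N.origin ∈ U ∧ N.destination ∉ U

/-- E⁺_U, the links with tail in `U` and head outside `U` -/
def cutOutLinks (U : Finset (Fin (N.n + 1))) : Finset N.E :=
  Finset.univ.filter fun e => N.src e ∈ U ∧ N.dst e ∉ U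

/-- E⁻_U, the links with tail outside `U` and head in `U` -/
def cutInLinks (U : Finset (Fin (N.n + 1))) : Finset N.E :=
  Finset.univ.filter fun e => N.src e ∉ U ∧ N.dst e ∈ U

/-- the capacity C(U) of a cut -/
def cutCapacity (fmax : N.E → ℝ) (U : Finset (Fin (N.n + 1))) : ℝ :=
  ∑ e ∈ N.cutOutLinks U, fmax e

/-- the min-cut capacity C of the network -/
def minCutCapacity (fmax : N.E → ℝ) : ℝ :=
  sInf {c | ∃ U, N.IsCut U ∧ c = N.cutCapacity fmax U}

/-- the residual capacity R_v(f) of a node `v` -/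
def residualCapacity (fmax f : N.E → ℝ) (v : Fin (N.n + 1)) : ℝ :=
  ∑ e ∈ N.outLinks v, (fmax e - f e)

/-- the minimal node residual capacity R(f) of the network -/
def minResidualCapacity (fmax f : N.E → ℝ) : ℝ :=
  sInf {r | ∃ v, v ≠ N.destination ∧ r = N.residualCapacity fmax f v}

/-- the set X_v(λ), viewed as vectors supported on E⁺_v -/
def Xset (fmax : N.E → ℝ) (v : Fin (N.n + 1)) (lam : ℝ) : Set (N.E → ℝ) :=
  {x | (∀ e ∈ N.outLinks v, x e ∈ Icc 0 (fmax e)) ∧ (∀ e ∉ N.outLinks v, x e = 0) ∧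
    ∑ e ∈ N.outLinks v, (fmax e - x e) ≤ lam}

/-- the cost c_v(x) = Σ_{e ∈ E⁺_v} min{x_e, d_{τ(e)}}, valued in `[0,∞]`
(with the convention `min{x, +∞} = x`) -/
def cval (d : Fin (N.n + 1) → ℝ≥0∞) (v : Fin (N.n + 1)) (x : N.E → ℝ) : ℝ≥0∞ :=
  ∑ e ∈ N.outLinks v, min (ENNReal.ofReal (x e)) (d (N.dst e))

/-- `d` is the backward recursion: `d_n = +∞` and
`d_v = min { c_v(x) : x ∈ X_v(λ°_v) }` for `v < n`, where `λ°_v = Σ_{e ∈ E⁺_v} f°_e`. -/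
def IsBackwardRecursion (fmax f : N.E → ℝ) (d : Fin (N.n + 1) → ℝ≥0∞) : Prop :=
  d N.destination = ⊤ ∧
  ∀ v, v ≠ N.destination →
    d v = sInf (N.cval d v '' N.Xset fmax v (∑ e ∈ N.outLinks v, f e))

/-! ### Dynamical networks -/

/-- the state space Γ_v for the routing decision at node `v`
(constraints on the outgoing links of `v` only) -/
def gammaV (ρmax : N.E → ℝ) (v : Fin (N.n + 1)) : Set (N.E → ℝ) :=
  {x | ∀ e ∈ N.outLinks v, x e ∈ Ico 0 (ρmax e)}

/-- the state space Γ_J for a subset `J` of links -/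
def gammaJ (ρmax : N.E → ℝ) (J : Finset N.E) : Set (N.E → ℝ) :=
  {x | ∀ e ∈ J, x e ∈ Ico 0 (ρmax e)}

/-- the closure of the state space Γ = ∏_e [0, ρ^max_e) -/
def clGamma (ρmax : N.E → ℝ) : Set (N.E → ℝ) :=
  {x | ∀ e, x e ∈ Icc 0 (ρmax e)}

/-- `μ` is a family of flow functions for the density capacities `ρmax`:
each `μ_e : [0, ρ^max_e] → ℝ₊` is continuously differentiable and strictly increasing
on `[0, ρ^max_e)` and satisfies `μ_e(0) = μ_e(ρ^max_e) = 0`. -/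
def IsFlowFunctions (ρmax : N.E → ℝ) (μ : N.E → ℝ → ℝ) : Prop :=
  ∀ e, (∀ x ∈ Icc 0 (ρmax e), 0 ≤ μ e x) ∧
    ContDiffOn ℝ 1 (μ e) (Ico 0 (ρmax e)) ∧
    StrictMonoOn (μ e) (Ico 0 (ρmax e)) ∧
    μ e 0 = 0 ∧ μ e (ρmax e) = 0

/-- `fmax` is the family of maximum flow capacities:
`f^max_e = lim_{ρ_e ↑ ρ^max_e} μ_e(ρ_e)`. -/
def HasMaxFlowCapacities (ρmax : N.E → ℝ) (μ : N.E → ℝ → ℝ) (fmax : N.E → ℝ) : Prop :=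
  ∀ e, Tendsto (μ e) (𝓝[<] ρmax e) (𝓝 (fmax e))

/-- `G` is a locally responsive distributed routing policy: for every non-destination
node `v`, `G^v` depends only on the densities of the outgoing links of `v`, takes values
in the simplex of probability vectors over `E⁺_v`, is continuously differentiable on `Γ_v`,
and satisfies properties (a) and (b). -/
def IsLocallyResponsive (ρmax : N.E → ℝ)
    (G : Fin (N.n + 1) → (N.E → ℝ) → N.E → ℝ) : Prop :=
  ∀ v, v ≠ N.destination →
    -- local information constraint
    (∀ x y : N.E → ℝ, (∀ e ∈ N.outLinks v, x e = y e) → G v x = G v y) ∧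
    -- `G^v` maps `Γ_v` into the simplex `S_v` of probability vectors over `E⁺_v`
    (∀ x ∈ N.gammaV ρmax v, (∀ e, 0 ≤ G v x e) ∧ (∀ e ∉ N.outLinks v, G v x e = 0) ∧
      ∑ e ∈ N.outLinks v, G v x e = 1) ∧
    -- continuous differentiability
    (∀ e, ContDiffOn ℝ 1 (fun x => G v x e) (N.gammaV ρmax v)) ∧
    -- property (a)
    (∀ J : Finset N.E, J ⊆ N.outLinks v → J.Nonempty → J ≠ N.outLinks v →
      ∃ GJ : (N.E → ℝ) → N.E → ℝ,
        (∀ j ∈ J, ContDiffOn ℝ 1 (fun x => GJ x j) (N.gammaJ ρmax J)) ∧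
        (∀ x ∈ N.gammaJ ρmax J, (∀ j ∈ J, 0 ≤ GJ x j) ∧ ∑ j ∈ J, GJ x j = 1) ∧
        ∀ xJ ∈ N.gammaJ ρmax J,
          (∀ e ∈ N.outLinks v \ J,
            Tendsto (fun x => G v x e)
              (𝓝[N.gammaV ρmax v] fun e' => if e' ∈ N.outLinks v \ J then ρmax e' else xJ e')
              (𝓝 0) ∧
            G v (fun e' => if e' ∈ N.outLinks v \ J then ρmax e' else xJ e') e = 0) ∧
          (∀ j ∈ J,
            Tendsto (fun x => G v x j)
              (𝓝[N.gammaV ρmax v] fun e' => if e' ∈ N.outLinks v \ J then ρmax e' else xJ e')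
              (𝓝 (GJ xJ j)) ∧
            G v (fun e' => if e' ∈ N.outLinks v \ J then ρmax e' else xJ e') j = GJ xJ j)) ∧
    -- property (b)
    (∀ j ∈ N.outLinks v, ∀ e ∈ N.outLinks v, j ≠ e → ∀ x ∈ N.gammaV ρmax v,
      0 ≤ deriv (fun s => G v (Function.update x e s) j) (x e))

/-- the activation status indicator ξ_e(t) of a link -/
def xi (ρmax : N.E → ℝ) (ρ : ℝ → N.E → ℝ) (t : ℝ) (e : N.E) : ℝ :=
  if ρ t e < ρmax e then 1 else 0

/-- the activation status indicator χ_v(t) = 1 - ∏_{e ∈ E⁺_v} (1 - ξ_e(t)) of a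
non-destination node (the destination is always active) -/
def chi (ρmax : N.E → ℝ) (ρ : ℝ → N.E → ℝ) (t : ℝ) (v : Fin (N.n + 1)) : ℝ :=
  if v = N.destination then 1
  else 1 - ∏ e ∈ N.outLinks v, (1 - N.xi ρmax ρ t e)

/-- the incoming flow λ_v(t) at node `v`: the constant inflow `λ0` at the origin,
and Σ_{e ∈ E⁻_v} f_e(t) with f_e(t) = μ_e(ρ_e(t)) otherwise -/
def nodeInflow (μ : N.E → ℝ → ℝ) (lam0 : ℝ) (ρ : ℝ → N.E → ℝ) (t : ℝ)
    (v : Fin (N.n + 1)) : ℝ :=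
  if v = N.origin then lam0 else ∑ e ∈ N.inLinks v, μ e (ρ t e)

/-- the right-hand side of the dynamics:
χ_{σ(e)}(t) λ_{σ(e)}(t) G^{σ(e)}_e(ρ(t)) - χ_{τ(e)}(t) f_e(t) -/
def rhs (ρmax : N.E → ℝ) (μ : N.E → ℝ → ℝ)
    (G : Fin (N.n + 1) → (N.E → ℝ) → N.E → ℝ) (lam0 : ℝ)
    (ρ : ℝ → N.E → ℝ) (t : ℝ) (e : N.E) : ℝ :=
  N.chi ρmax ρ t (N.src e) * N.nodeInflow μ lam0 ρ t (N.src e) * G (N.src e) (ρ t) e -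
    N.chi ρmax ρ t (N.dst e) * μ e (ρ t e)

/-- `ρ : [0,∞) → cl(Γ)` is a solution of the dynamical network, in integral form -/
def IsSolution (ρmax : N.E → ℝ) (μ : N.E → ℝ → ℝ)
    (G : Fin (N.n + 1) → (N.E → ℝ) → N.E → ℝ) (lam0 : ℝ)
    (ρ : ℝ → N.E → ℝ) : Prop :=
  (∀ t, 0 ≤ t → ρ t ∈ N.clGamma ρmax) ∧
  ∀ e, ∀ t, 0 ≤ t →
    ρ t e = ρ 0 e + ∫ s in (0:ℝ)..t, N.rhs ρmax μ G lam0 ρ s e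

/-- the dynamical network is transferring w.r.t. the initial density of the solution `ρ`:
`lim_{t→∞} (1/t) ∫₀ᵗ λ_n(s) ds = λ0` -/
def Transferring (μ : N.E → ℝ → ℝ) (lam0 : ℝ) (ρ : ℝ → N.E → ℝ) : Prop :=
  Tendsto (fun t => (1 / t) * ∫ s in (0:ℝ)..t, N.nodeInflow μ lam0 ρ s N.destination)
    atTop (𝓝 lam0)

/-- `ρ0 ∈ Γ` is an equilibrium density vector for the dynamical network -/
def IsEquilibriumDensity (ρmax : N.E → ℝ) (μ : N.E → ℝ → ℝ)
    (G : Fin (N.n + 1) → (N.E → ℝ) → N.E → ℝ) (lam0 : ℝ) (ρ0 : N.E → ℝ) : Prop :=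
  (∀ e, ρ0 e ∈ Ico 0 (ρmax e)) ∧
  (∀ e ∈ N.outLinks N.origin, lam0 * G N.origin ρ0 e = μ e (ρ0 e)) ∧
  ∀ v, v ≠ N.origin → v ≠ N.destination → ∀ e ∈ N.outLinks v,
    (∑ e' ∈ N.inLinks v, μ e' (ρ0 e')) * G v ρ0 e = μ e (ρ0 e)

/-- `μt` is an admissible perturbation of the flow functions `μ` -/
def IsAdmissiblePerturbation (ρmax : N.E → ℝ) (μ μt : N.E → ℝ → ℝ) : Prop :=
  N.IsFlowFunctions ρmax μt ∧ ∀ e, ∀ x ∈ Icc 0 (ρmax e), μt e x ≤ μ e x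

/-- the magnitude ‖δ‖₁ = Σ_e sup_{ρ_e ∈ [0,ρ^max_e]} (μ_e(ρ_e) - μ̃_e(ρ_e)) of an
admissible perturbation -/
def perturbationMagnitude (ρmax : N.E → ℝ) (μ μt : N.E → ℝ → ℝ) : ℝ :=
  ∑ e : N.E, sSup ((fun x => μ e x - μt e x) '' Icc 0 (ρmax e))

/-- the margin of resilience γ(ρ°): the infimum of the magnitudes of the admissible
perturbations for which the perturbed dynamical network is not transferring with
respect to the initial density ρ° (`+∞` if there is no such perturbation) -/
def marginOfResilience (ρmax : N.E → ℝ) (μ : N.E → ℝ → ℝ)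
    (G : Fin (N.n + 1) → (N.E → ℝ) → N.E → ℝ) (lam0 : ℝ) (ρ0 : N.E → ℝ) : ℝ≥0∞ :=
  sInf {m | ∃ μt : N.E → ℝ → ℝ, N.IsAdmissiblePerturbation ρmax μ μt ∧
    (∃ ρ : ℝ → N.E → ℝ, N.IsSolution ρmax μt G lam0 ρ ∧ (∀ e, ρ 0 e = ρ0 e) ∧
      ¬ N.Transferring μt lam0 ρ) ∧
    m = ENNReal.ofReal (N.perturbationMagnitude ρmax μ μt)}

end FlowNetwork

end


/-- The example network: nodes `{0, 1, 2}` (origin `0`, destination `2`), with links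
`e1 : 0 → 2`, `e2 : 0 → 1`, `e3 : 1 → 2` and `e4 : 1 → 2`. -/
def exampleNetwork : FlowNetwork where
  n := 2
  npos := by norm_num
  E := Fin 4
  fintE := inferInstance
  decE := inferInstance
  src := ![0, 0, 1, 1]
  dst := ![2, 1, 2, 2]
  src_lt_dst := by decide


/-! ### Auxiliary lemmas -/

theorem aemeas_glue {α : Type*} [MeasurableSpace α] {μ : Measure α} {f : α → ℝ} {A : Set α}
    (hA : MeasurableSet A) (h1 : AEMeasurable f (μ.restrict A))
    (h2 : AEMeasurable f (μ.restrict Aᶜ)) : AEMeasurable f μ := by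
  have h := h1.add_measure h2
  rwa [Measure.restrict_add_restrict_compl hA] at h

theorem contOn_comp_aemeas {α β γ : Type*} [MeasurableSpace α] [MeasurableSpace β]
    [TopologicalSpace β] [BorelSpace β] [MeasurableSpace γ] [TopologicalSpace γ] [BorelSpace γ]
    {μ : Measure α} {f : α → β} {g : β → γ} {s : Set β} (hg : ContinuousOn g s)
    (hs : MeasurableSet s) (hf : AEMeasurable f μ) (hmem : ∀ᵐ x ∂μ, f x ∈ s) :
    AEMeasurable (fun x => g (f x)) μ := by
  have h1 : AEMeasurable g ((μ.map f).restrict s) := hg.aemeasurable hs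
  have h0 : ∀ᵐ y ∂(μ.map f), y ∈ s := (ae_map_iff hf hs).2 hmem
  rw [Measure.restrict_eq_self_of_ae_mem h0] at h1
  exact h1.comp_aemeasurable hf

theorem aemeas_pi {α ι : Type*} [MeasurableSpace α] [Finite ι] {μ : Measure α} {f : α → ι → ℝ}
    (h : ∀ i, AEMeasurable (fun x => f x i) μ) : AEMeasurable f μ := by
  refine ⟨fun x i => (h i).mk _ x, measurable_pi_iff.2 fun i => (h i).measurable_mk, ?_⟩
  have he : ∀ᶠ x in ae μ, ∀ i, f x i = (h i).mk _ x := by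
    rw [Filter.eventually_all]; exact fun i => (h i).ae_eq_mk
  filter_upwards [he] with x hx
  funext i; exact hx i

theorem primitive_contOn {f : ℝ → ℝ} {J : Set ℝ}
    (hJ0 : ∀ t ∈ J, 0 ≤ t) (hJi : ∀ t ∈ J, IntervalIntegrable f volume 0 t) :
    ContinuousOn (fun t => ∫ s in (0:ℝ)..t, f s) J := by
  intro t₀ ht₀
  by_cases hbig : ∃ t₁ ∈ J, t₀ < t₁
  · obtain ⟨t₁, ht₁, hlt⟩ := hbig
    have hInt : IntegrableOn f (uIcc 0 t₁) volume := by
      rw [uIcc_of_le (hJ0 t₁ ht₁)]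
      exact (intervalIntegrable_iff_integrableOn_Icc_of_le (hJ0 t₁ ht₁)).1 (hJi t₁ ht₁)
    have hcont := intervalIntegral.continuousOn_primitive_interval (a := 0) (b := t₁) hInt
    have hmem : t₀ ∈ uIcc 0 t₁ := by
      rw [uIcc_of_le (hJ0 t₁ ht₁)]
      exact ⟨hJ0 t₀ ht₀, hlt.le⟩
    have h1 : ContinuousWithinAt (fun t => ∫ s in (0:ℝ)..t, f s) (uIcc 0 t₁) t₀ := hcont t₀ hmem
    refine h1.mono_of_mem_nhdsWithin ?_
    have h2 : Iio t₁ ∈ 𝓝[J] t₀ := nhdsWithin_le_nhds (Iio_mem_nhds hlt)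
    refine Filter.mem_of_superset (Filter.inter_mem self_mem_nhdsWithin h2) ?_
    rintro x ⟨hxJ, hxlt⟩
    rw [uIcc_of_le (hJ0 t₁ ht₁)]
    exact ⟨hJ0 x hxJ, hxlt.le⟩
  · push_neg at hbig
    have hInt : IntegrableOn f (uIcc 0 t₀) volume := by
      rw [uIcc_of_le (hJ0 t₀ ht₀)]
      exact (intervalIntegrable_iff_integrableOn_Icc_of_le (hJ0 t₀ ht₀)).1 (hJi t₀ ht₀)
    have hcont := intervalIntegral.continuousOn_primitive_interval (a := 0) (b := t₀) hInt
    have hmem : t₀ ∈ uIcc 0 t₀ := by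
      rw [uIcc_of_le (hJ0 t₀ ht₀)]; exact ⟨hJ0 t₀ ht₀, le_rfl⟩
    refine (hcont t₀ hmem).mono ?_
    intro x hx
    rw [uIcc_of_le (hJ0 t₀ ht₀)]
    exact ⟨hJ0 x hx, hbig x hx⟩

theorem primitive_aemeas (f : ℝ → ℝ) (c : ℝ) (F : ℝ → ℝ)
    (hF : ∀ t, 0 ≤ t → F t = c + ∫ s in (0:ℝ)..t, f s) :
    AEMeasurable F (volume.restrict (Ioi (0:ℝ))) := by
  set J : Set ℝ := {t | 0 ≤ t ∧ IntervalIntegrable f volume 0 t} with hJdef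
  have hJord : J.OrdConnected := by
    constructor
    rintro x ⟨hx0, _⟩ y ⟨hy0, hyi⟩ z hz
    refine ⟨hx0.trans hz.1, hyi.mono_set ?_⟩
    rw [uIcc_of_le (hx0.trans hz.1), uIcc_of_le hy0]
    exact Icc_subset_Icc le_rfl hz.2
  have hJm : MeasurableSet J := hJord.measurableSet
  have hP : ContinuousOn (fun t => c + ∫ s in (0:ℝ)..t, f s) J := by
    exact continuousOn_const.add (primitive_contOn (fun t ht => ht.1) (fun t ht => ht.2))
  refine aemeas_glue hJm ?_ ?_
  · have h1 : AEMeasurable (fun t => c + ∫ s in (0:ℝ)..t, f s)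
        ((volume.restrict (Ioi (0:ℝ))).restrict J) := hP.aemeasurable hJm
    refine h1.congr ?_
    have h2 : ∀ᵐ t ∂((volume.restrict (Ioi (0:ℝ))).restrict J), t ∈ J :=
      ae_restrict_mem hJm
    filter_upwards [h2] with t ht
    exact (hF t ht.1).symm
  · have h2 : ∀ᵐ t ∂((volume.restrict (Ioi (0:ℝ))).restrict Jᶜ), t ∈ Jᶜ :=
      ae_restrict_mem hJm.compl
    have h3 : ∀ᵐ t ∂((volume.restrict (Ioi (0:ℝ))).restrict Jᶜ), t ∈ Ioi (0:ℝ) := by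
      rw [Measure.restrict_restrict hJm.compl]
      exact (ae_restrict_mem (hJm.compl.inter measurableSet_Ioi)).mono fun x hx => hx.2
    refine (aemeasurable_const (b := c)).congr ?_
    filter_upwards [h2, h3] with t htJ ht0
    have hni : ¬ IntervalIntegrable f volume 0 t := by
      intro hint; exact htJ ⟨le_of_lt ht0, hint⟩
    rw [hF t (le_of_lt ht0), intervalIntegral.integral_undef hni, add_zero]


section NetComp

instance (n : ℕ) : OfNat exampleNetwork.E n := inferInstanceAs (OfNat (Fin 4) n)
instance : Fact (exampleNetwork.n + 1 = 3) := ⟨rfl⟩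

lemma net_dest : exampleNetwork.destination = 2 := by decide
lemma net_out0 : exampleNetwork.outLinks 0 = ({0, 1} : Finset exampleNetwork.E) := by decide
lemma net_out1 : exampleNetwork.outLinks 1 = ({2, 3} : Finset exampleNetwork.E) := by decide
lemma net_in1 : exampleNetwork.inLinks 1 = ({1} : Finset exampleNetwork.E) := by decide
lemma net_in2 : exampleNetwork.inLinks 2 = ({0, 2, 3} : Finset exampleNetwork.E) := by decide
lemma net_src0 : exampleNetwork.src 0 = 0 := rfl
lemma net_src1 : exampleNetwork.src 1 = 0 := rfl
lemma net_src2 : exampleNetwork.src 2 = 1 := rfl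
lemma net_src3 : exampleNetwork.src 3 = 1 := rfl
lemma net_dst0 : exampleNetwork.dst 0 = 2 := rfl
lemma net_dst1 : exampleNetwork.dst 1 = 1 := rfl
lemma net_dst2 : exampleNetwork.dst 2 = 2 := rfl
lemma net_dst3 : exampleNetwork.dst 3 = 2 := rfl
lemma net_origin : exampleNetwork.origin = 0 := rfl
lemma node0_ne_dest : (0 : Fin (exampleNetwork.n + 1)) ≠ exampleNetwork.destination := by decide
lemma node1_ne_dest : (1 : Fin (exampleNetwork.n + 1)) ≠ exampleNetwork.destination := by decide

lemma resid_eq : exampleNetwork.minResidualCapacity ![3, 1.5, 0.75, 0.75] ![1, 1, 0.5, 0.5] = 0.5 := by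
  have hset : {r | ∃ v, v ≠ exampleNetwork.destination ∧
      r = exampleNetwork.residualCapacity ![3, 1.5, 0.75, 0.75] ![1, 1, 0.5, 0.5] v}
      = {2.5, 0.5} := by
    have h0 : exampleNetwork.residualCapacity ![3, 1.5, 0.75, 0.75] ![1, 1, 0.5, 0.5] 0 = 2.5 := by
      unfold FlowNetwork.residualCapacity; rw [net_out0]
      show ∑ e ∈ ({0, 1} : Finset (Fin 4)), (![(3:ℝ), 1.5, 0.75, 0.75] e - ![1, 1, 0.5, 0.5] e) = 2.5
      rw [Finset.sum_pair (by decide : (0 : Fin 4) ≠ 1)]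
      norm_num
    have h1 : exampleNetwork.residualCapacity ![3, 1.5, 0.75, 0.75] ![1, 1, 0.5, 0.5] 1 = 0.5 := by
      unfold FlowNetwork.residualCapacity; rw [net_out1]
      show ∑ e ∈ ({2, 3} : Finset (Fin 4)), (![(3:ℝ), 1.5, 0.75, 0.75] e - ![1, 1, 0.5, 0.5] e) = 0.5
      rw [Finset.sum_pair (by decide : (2 : Fin 4) ≠ 3)]
      simp
      norm_num
    ext r
    simp only [Set.mem_setOf_eq, Set.mem_insert_iff, Set.mem_singleton_iff]
    constructor
    · rintro ⟨v, hv, rfl⟩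
      have : v = 0 ∨ v = 1 := by revert hv; revert v; decide
      rcases this with rfl | rfl
      · exact Or.inl h0
      · exact Or.inr h1
    · rintro (rfl | rfl)
      · exact ⟨0, node0_ne_dest, h0.symm⟩
      · exact ⟨1, node1_ne_dest, h1.symm⟩
  unfold FlowNetwork.minResidualCapacity; rw [hset, csInf_pair]
  norm_num

end NetComp


section ChiG

variable (ρmax : exampleNetwork.E → ℝ)
variable (G : Fin (exampleNetwork.n + 1) → (exampleNetwork.E → ℝ) → exampleNetwork.E → ℝ)

lemma chi_dest (ρ : ℝ → exampleNetwork.E → ℝ) (t : ℝ) :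
    exampleNetwork.chi ρmax ρ t 2 = 1 := by
  rw [FlowNetwork.chi, if_pos net_dest.symm]

lemma chi0_eq (ρ : ℝ → exampleNetwork.E → ℝ) (t : ℝ) :
    exampleNetwork.chi ρmax ρ t 0 = if ρ t 0 < ρmax 0 ∨ ρ t 1 < ρmax 1 then 1 else 0 := by
  rw [FlowNetwork.chi, if_neg node0_ne_dest, net_out0,
    Finset.prod_pair (show (0 : exampleNetwork.E) ≠ 1 by decide)]
  unfold FlowNetwork.xi
  by_cases h0 : ρ t 0 < ρmax 0 <;> by_cases h1 : ρ t 1 < ρmax 1 <;>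
    simp [h0, h1]

lemma chi1_eq (ρ : ℝ → exampleNetwork.E → ℝ) (t : ℝ) :
    exampleNetwork.chi ρmax ρ t 1 = if ρ t 2 < ρmax 2 ∨ ρ t 3 < ρmax 3 then 1 else 0 := by
  rw [FlowNetwork.chi, if_neg node1_ne_dest, net_out1,
    Finset.prod_pair (show (2 : exampleNetwork.E) ≠ 3 by decide)]
  unfold FlowNetwork.xi
  by_cases h0 : ρ t 2 < ρmax 2 <;> by_cases h1 : ρ t 3 < ρmax 3 <;>
    simp [h0, h1]

variable (hG : exampleNetwork.IsLocallyResponsive ρmax G)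
include hG

lemma Gfull (v : Fin 3) (hv : v ≠ exampleNetwork.destination) (x : exampleNetwork.E → ℝ)
    (hx : ∀ e ∈ exampleNetwork.outLinks v, x e ∈ Ico 0 (ρmax e)) :
    (∀ e, 0 ≤ G v x e) ∧ ∑ e ∈ exampleNetwork.outLinks v, G v x e = 1 := by
  have h := (hG v hv).2.1 x hx
  exact ⟨h.1, h.2.2⟩

lemma Gpartial (v : Fin 3) (hv : v ≠ exampleNetwork.destination) (a b : exampleNetwork.E)
    (hout : exampleNetwork.outLinks v = {a, b}) (hab : a ≠ b)
    (x : exampleNetwork.E → ℝ) (hx0 : 0 ≤ x a) (ha : x a < ρmax a) (hb : x b = ρmax b) :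
    G v x a = 1 ∧ G v x b = 0 := by
  obtain ⟨hloc, hsimplex, hcdiff, hpropa, hpropb⟩ := hG v hv
  have hJsub : ({a} : Finset exampleNetwork.E) ⊆ exampleNetwork.outLinks v := by
    rw [hout]; intro z hz; rw [Finset.mem_singleton] at hz; rw [hz]
    exact Finset.mem_insert_self a _
  have haout : a ∈ exampleNetwork.outLinks v := hJsub (Finset.mem_singleton_self a)
  have hbout : b ∈ exampleNetwork.outLinks v := by
    rw [hout]; exact Finset.mem_insert_of_mem (Finset.mem_singleton_self b)
  have hJne : ({a} : Finset exampleNetwork.E) ≠ exampleNetwork.outLinks v := by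
    intro h
    have : b ∈ ({a} : Finset exampleNetwork.E) := h ▸ hbout
    rw [Finset.mem_singleton] at this
    exact hab this.symm
  obtain ⟨GJ, hGJcd, hGJsimp, hGJbd⟩ :=
    hpropa {a} hJsub ⟨a, Finset.mem_singleton_self a⟩ hJne
  have hxJ : x ∈ exampleNetwork.gammaJ ρmax {a} := by
    intro j hj; rw [Finset.mem_singleton] at hj; rw [hj]; exact ⟨hx0, ha⟩
  have hbd := hGJbd x hxJ
  have hxp : ∀ e ∈ exampleNetwork.outLinks v, x e =
      (fun e' => if e' ∈ exampleNetwork.outLinks v \ ({a} : Finset exampleNetwork.E)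
        then ρmax e' else x e') e := by
    intro e he
    rw [hout, Finset.mem_insert, Finset.mem_singleton] at he
    show x e = if e ∈ exampleNetwork.outLinks v \ ({a} : Finset exampleNetwork.E)
      then ρmax e else x e
    rcases he with he | he
    · have hna : e ∉ exampleNetwork.outLinks v \ ({a} : Finset exampleNetwork.E) := by
        rw [Finset.mem_sdiff, Finset.mem_singleton]
        intro hc; exact hc.2 he
      rw [if_neg hna]
    · have hmem : e ∈ exampleNetwork.outLinks v \ ({a} : Finset exampleNetwork.E) := by
        rw [Finset.mem_sdiff, Finset.mem_singleton, he]
        exact ⟨hbout, fun h => hab h.symm⟩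
      rw [if_pos hmem, he, hb]
  have hGeq := hloc x _ hxp
  have hb0 : G v _ b = 0 :=
    (hbd.1 b (by rw [Finset.mem_sdiff, Finset.mem_singleton]; exact ⟨hbout, fun h => hab h.symm⟩)).2
  have ha1 : G v _ a = GJ x a := (hbd.2 a (Finset.mem_singleton_self a)).2
  have hGJ1 : GJ x a = 1 := by
    have := (hGJsimp x hxJ).2
    rwa [Finset.sum_singleton] at this
  constructor
  · rw [hGeq, ha1, hGJ1]
  · rw [hGeq, hb0]

lemma Gbound (v : Fin 3) (hv : v ≠ exampleNetwork.destination) (a b : exampleNetwork.E)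
    (hout : exampleNetwork.outLinks v = {a, b}) (hab : a ≠ b)
    (x : exampleNetwork.E → ℝ) (hx : ∀ e, x e ∈ Icc 0 (ρmax e))
    (hlt : x a < ρmax a ∨ x b < ρmax b) :
    0 ≤ G v x a ∧ 0 ≤ G v x b ∧ G v x a + G v x b = 1 := by
  by_cases ha : x a < ρmax a <;> by_cases hb : x b < ρmax b
  · have hmem : ∀ e ∈ exampleNetwork.outLinks v, x e ∈ Ico 0 (ρmax e) := by
      intro e he
      rw [hout, Finset.mem_insert, Finset.mem_singleton] at he
      rcases he with he | he
      · rw [he]; exact ⟨(hx a).1, ha⟩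
      · rw [he]; exact ⟨(hx b).1, hb⟩
    obtain ⟨hnn, hsum⟩ := Gfull ρmax G hG v hv x hmem
    rw [hout, Finset.sum_pair hab] at hsum
    exact ⟨hnn a, hnn b, hsum⟩
  · have hbe : x b = ρmax b := le_antisymm (hx b).2 (not_lt.1 hb)
    obtain ⟨h1, h0⟩ := Gpartial ρmax G hG v hv a b hout hab x (hx a).1 ha hbe
    rw [h1, h0]; norm_num
  · have hae : x a = ρmax a := le_antisymm (hx a).2 (not_lt.1 ha)
    have hout' : exampleNetwork.outLinks v = {b, a} := by rw [hout, Finset.pair_comm]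
    obtain ⟨h1, h0⟩ := Gpartial ρmax G hG v hv b a hout' hab.symm x (hx b).1 hb hae
    rw [h1, h0]; norm_num
  · rcases hlt with h | h
    · exact absurd h ha
    · exact absurd h hb

end ChiG


section Solution

/-- bound on flow functions by max flow capacities -/
lemma mu_le_fmax (ρmax : exampleNetwork.E → ℝ) (hρmax : ∀ e, 0 < ρmax e)
    (μ : exampleNetwork.E → ℝ → ℝ) (hμ : exampleNetwork.IsFlowFunctions ρmax μ)
    (hfmax : exampleNetwork.HasMaxFlowCapacities ρmax μ ![3, 1.5, 0.75, 0.75]) :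
    ∀ e, ∀ x ∈ Icc 0 (ρmax e), μ e x ≤ ![3, 1.5, 0.75, 0.75] e := by
  intro e x hx
  obtain ⟨hpos, hcd, hmono, h0, hrm⟩ := hμ e
  have hne : (𝓝[<] (ρmax e)).NeBot := nhdsLT_neBot _
  rcases eq_or_lt_of_le hx.2 with heq | hlt
  · rw [heq, hrm]
    refine ge_of_tendsto (hfmax e) ?_
    have hIoo : Ioo 0 (ρmax e) ∈ 𝓝[<] (ρmax e) :=
      Ioo_mem_nhdsLT_of_mem ⟨hρmax e, le_rfl⟩
    filter_upwards [hIoo] with y hy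
    exact hpos y ⟨hy.1.le, hy.2.le⟩
  · refine ge_of_tendsto (hfmax e) ?_
    have hIoo : Ioo x (ρmax e) ∈ 𝓝[<] (ρmax e) := Ioo_mem_nhdsLT_of_mem ⟨hlt, le_rfl⟩
    filter_upwards [hIoo] with y hy
    exact (hmono.monotoneOn) ⟨hx.1, hlt⟩ ⟨hx.1.trans hy.1.le, hy.2⟩ hy.1.le

lemma fmax_le_three : ∀ e : exampleNetwork.E, ![(3:ℝ), 1.5, 0.75, 0.75] e ≤ 3 := by
  intro e
  fin_cases e <;> norm_num

lemma mut_bounds (ρmax : exampleNetwork.E → ℝ) (hρmax : ∀ e, 0 < ρmax e)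
    (μ : exampleNetwork.E → ℝ → ℝ) (hμ : exampleNetwork.IsFlowFunctions ρmax μ)
    (hfmax : exampleNetwork.HasMaxFlowCapacities ρmax μ ![3, 1.5, 0.75, 0.75])
    (μt : exampleNetwork.E → ℝ → ℝ)
    (hadm : exampleNetwork.IsAdmissiblePerturbation ρmax μ μt) :
    ∀ e, ∀ x ∈ Icc 0 (ρmax e),
      0 ≤ μt e x ∧ μt e x ≤ ![3, 1.5, 0.75, 0.75] e := by
  intro e x hx
  exact ⟨(hadm.1 e).1 x hx, (hadm.2 e x hx).trans (mu_le_fmax ρmax hρmax μ hμ hfmax e x hx)⟩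

/-- each link's perturbation is at most the total magnitude -/
lemma pert_small (ρmax : exampleNetwork.E → ℝ) (hρmax : ∀ e, 0 < ρmax e)
    (μ : exampleNetwork.E → ℝ → ℝ) (hμ : exampleNetwork.IsFlowFunctions ρmax μ)
    (hfmax : exampleNetwork.HasMaxFlowCapacities ρmax μ ![3, 1.5, 0.75, 0.75])
    (μt : exampleNetwork.E → ℝ → ℝ)
    (hadm : exampleNetwork.IsAdmissiblePerturbation ρmax μ μt)
    (hmag : exampleNetwork.perturbationMagnitude ρmax μ μt ≤ 0.6) :
    ∀ e, ∀ x ∈ Icc 0 (ρmax e), μ e x - μt e x ≤ 0.6 := by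
  have hbdd : ∀ e : exampleNetwork.E,
      BddAbove ((fun x => μ e x - μt e x) '' Icc 0 (ρmax e)) := by
    intro e
    refine ⟨![3, 1.5, 0.75, 0.75] e, ?_⟩
    rintro _ ⟨y, hy, rfl⟩
    have h1 := mu_le_fmax ρmax hρmax μ hμ hfmax e y hy
    have h2 := (hadm.1 e).1 y hy
    simp only
    linarith
  have hmem0 : ∀ e : exampleNetwork.E,
      (0:ℝ) ∈ (fun x => μ e x - μt e x) '' Icc 0 (ρmax e) := by
    intro e
    refine ⟨0, ⟨le_rfl, (hρmax e).le⟩, ?_⟩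
    simp only
    rw [(hμ e).2.2.2.1, (hadm.1 e).2.2.2.1, sub_zero]
  have hnn : ∀ e : exampleNetwork.E,
      0 ≤ sSup ((fun x => μ e x - μt e x) '' Icc 0 (ρmax e)) := by
    intro e
    exact le_csSup (hbdd e) (hmem0 e)
  intro e x hx
  have h1 : μ e x - μt e x ≤ sSup ((fun x => μ e x - μt e x) '' Icc 0 (ρmax e)) :=
    le_csSup (hbdd e) ⟨x, hx, rfl⟩
  have h2 : sSup ((fun x => μ e x - μt e x) '' Icc 0 (ρmax e)) ≤
      exampleNetwork.perturbationMagnitude ρmax μ μt := by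
    rw [FlowNetwork.perturbationMagnitude]
    exact Finset.single_le_sum (fun i _ => hnn i) (Finset.mem_univ e)
  linarith

/-- per-edge normal forms of the right-hand side -/
lemma rhs0_eq (ρmax : exampleNetwork.E → ℝ) (μt : exampleNetwork.E → ℝ → ℝ)
    (G : Fin (exampleNetwork.n + 1) → (exampleNetwork.E → ℝ) → exampleNetwork.E → ℝ)
    (ρ : ℝ → exampleNetwork.E → ℝ) (s : ℝ) : exampleNetwork.rhs ρmax μt G 2 ρ s 0 =
    exampleNetwork.chi ρmax ρ s 0 * 2 * G 0 (ρ s) 0 - μt 0 (ρ s 0) := by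
  unfold FlowNetwork.rhs
  rw [net_src0, net_dst0, chi_dest]
  rw [FlowNetwork.nodeInflow, if_pos net_origin.symm]
  ring

lemma rhs1_eq (ρmax : exampleNetwork.E → ℝ) (μt : exampleNetwork.E → ℝ → ℝ)
    (G : Fin (exampleNetwork.n + 1) → (exampleNetwork.E → ℝ) → exampleNetwork.E → ℝ)
    (ρ : ℝ → exampleNetwork.E → ℝ) (s : ℝ) : exampleNetwork.rhs ρmax μt G 2 ρ s 1 =
    exampleNetwork.chi ρmax ρ s 0 * 2 * G 0 (ρ s) 1
      - exampleNetwork.chi ρmax ρ s 1 * μt 1 (ρ s 1) := by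
  unfold FlowNetwork.rhs
  rw [net_src1, net_dst1]
  rw [FlowNetwork.nodeInflow, if_pos net_origin.symm]

lemma rhs2_eq (ρmax : exampleNetwork.E → ℝ) (μt : exampleNetwork.E → ℝ → ℝ)
    (G : Fin (exampleNetwork.n + 1) → (exampleNetwork.E → ℝ) → exampleNetwork.E → ℝ)
    (ρ : ℝ → exampleNetwork.E → ℝ) (s : ℝ) : exampleNetwork.rhs ρmax μt G 2 ρ s 2 =
    exampleNetwork.chi ρmax ρ s 1 * μt 1 (ρ s 1) * G 1 (ρ s) 2 - μt 2 (ρ s 2) := by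
  unfold FlowNetwork.rhs
  rw [net_src2, net_dst2, chi_dest]
  rw [FlowNetwork.nodeInflow, if_neg (by rw [net_origin]; decide), net_in1,
    Finset.sum_singleton]
  ring

lemma rhs3_eq (ρmax : exampleNetwork.E → ℝ) (μt : exampleNetwork.E → ℝ → ℝ)
    (G : Fin (exampleNetwork.n + 1) → (exampleNetwork.E → ℝ) → exampleNetwork.E → ℝ)
    (ρ : ℝ → exampleNetwork.E → ℝ) (s : ℝ) : exampleNetwork.rhs ρmax μt G 2 ρ s 3 =
    exampleNetwork.chi ρmax ρ s 1 * μt 1 (ρ s 1) * G 1 (ρ s) 3 - μt 3 (ρ s 3) := by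
  unfold FlowNetwork.rhs
  rw [net_src3, net_dst3, chi_dest]
  rw [FlowNetwork.nodeInflow, if_neg (by rw [net_origin]; decide), net_in1,
    Finset.sum_singleton]
  ring

/-- the `χ·G` product is bounded between 0 and 1 -/
lemma chiG_bound (ρmax : exampleNetwork.E → ℝ)
    (G : Fin (exampleNetwork.n + 1) → (exampleNetwork.E → ℝ) → exampleNetwork.E → ℝ)
    (hG : exampleNetwork.IsLocallyResponsive ρmax G)
    (ρ : ℝ → exampleNetwork.E → ℝ)
    (v : Fin 3) (hv : v ≠ exampleNetwork.destination) (a b e : exampleNetwork.E)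
    (hout : exampleNetwork.outLinks v = {a, b}) (hab : a ≠ b) (he : e = a ∨ e = b)
    (hchieq : ∀ s : ℝ, exampleNetwork.chi ρmax ρ s v =
      if ρ s a < ρmax a ∨ ρ s b < ρmax b then 1 else 0)
    (s : ℝ) (hρs : ∀ e, ρ s e ∈ Icc 0 (ρmax e)) :
    0 ≤ exampleNetwork.chi ρmax ρ s v * G v (ρ s) e ∧
      exampleNetwork.chi ρmax ρ s v * G v (ρ s) e ≤ 1 := by
  by_cases hc : ρ s a < ρmax a ∨ ρ s b < ρmax b
  · have h1 : exampleNetwork.chi ρmax ρ s v = 1 := by rw [hchieq s, if_pos hc]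
    obtain ⟨ha, hb, hsum⟩ := Gbound ρmax G hG v hv a b hout hab (ρ s) hρs hc
    rw [h1, one_mul]
    rcases he with rfl | rfl
    · exact ⟨ha, by linarith⟩
    · exact ⟨hb, by linarith⟩
  · rw [hchieq s, if_neg hc, zero_mul]
    norm_num

lemma chi01 (ρmax : exampleNetwork.E → ℝ) (ρ : ℝ → exampleNetwork.E → ℝ) (s : ℝ) (v : Fin (exampleNetwork.n + 1)) :
    0 ≤ exampleNetwork.chi ρmax ρ s v ∧ exampleNetwork.chi ρmax ρ s v ≤ 1 := by
  by_cases hv : v = exampleNetwork.destination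
  · rw [FlowNetwork.chi, if_pos hv]; norm_num
  · have hv' : v = 0 ∨ v = 1 := by revert hv; revert v; decide
    rcases hv' with rfl | rfl
    · rw [chi0_eq]
      by_cases hc : ρ s 0 < ρmax 0 ∨ ρ s 1 < ρmax 1 <;> simp [hc]
    · rw [chi1_eq]
      by_cases hc : ρ s 2 < ρmax 2 ∨ ρ s 3 < ρmax 3 <;> simp [hc]

/-- uniform bound on the right-hand side -/
lemma rhs_bound (ρmax : exampleNetwork.E → ℝ) (hρmax : ∀ e, 0 < ρmax e)
    (μ : exampleNetwork.E → ℝ → ℝ) (hμ : exampleNetwork.IsFlowFunctions ρmax μ)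
    (hfmax : exampleNetwork.HasMaxFlowCapacities ρmax μ ![3, 1.5, 0.75, 0.75])
    (G : Fin (exampleNetwork.n + 1) → (exampleNetwork.E → ℝ) → exampleNetwork.E → ℝ)
    (hG : exampleNetwork.IsLocallyResponsive ρmax G)
    (μt : exampleNetwork.E → ℝ → ℝ)
    (hadm : exampleNetwork.IsAdmissiblePerturbation ρmax μ μt)
    (ρ : ℝ → exampleNetwork.E → ℝ)
    (hst : ∀ t, 0 ≤ t → ∀ e, ρ t e ∈ Icc 0 (ρmax e)) :
    ∀ e, ∀ s, 0 ≤ s → |exampleNetwork.rhs ρmax μt G 2 ρ s e| ≤ 6 := by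
  have hmb := mut_bounds ρmax hρmax μ hμ hfmax μt hadm
  have hmub : ∀ e s, 0 ≤ s → 0 ≤ μt e (ρ s e) ∧ μt e (ρ s e) ≤ 3 := by
    intro e s hs
    obtain ⟨h1, h2⟩ := hmb e (ρ s e) (hst s hs e)
    exact ⟨h1, h2.trans (fmax_le_three e)⟩
  intro e s hs
  have hb0 : ∀ e', e' = (0 : exampleNetwork.E) ∨ e' = 1 →
      0 ≤ exampleNetwork.chi ρmax ρ s 0 * G 0 (ρ s) e' ∧
        exampleNetwork.chi ρmax ρ s 0 * G 0 (ρ s) e' ≤ 1 := fun e' he' =>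
    chiG_bound ρmax G hG ρ 0 node0_ne_dest 0 1 e' net_out0 (by decide) he'
      (chi0_eq ρmax ρ) s (hst s hs)
  have hb1 : ∀ e', e' = (2 : exampleNetwork.E) ∨ e' = 3 →
      0 ≤ exampleNetwork.chi ρmax ρ s 1 * G 1 (ρ s) e' ∧
        exampleNetwork.chi ρmax ρ s 1 * G 1 (ρ s) e' ≤ 1 := fun e' he' =>
    chiG_bound ρmax G hG ρ 1 node1_ne_dest 2 3 e' net_out1 (by decide) he'
      (chi1_eq ρmax ρ) s (hst s hs)
  have hchi := chi01 ρmax ρ s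
  have he : e = 0 ∨ e = 1 ∨ e = 2 ∨ e = 3 := by revert e; decide
  rcases he with rfl | rfl | rfl | rfl
  · rw [rhs0_eq]
    obtain ⟨h1, h2⟩ := hb0 0 (Or.inl rfl)
    obtain ⟨h3, h4⟩ := hmub 0 s hs
    rw [abs_le]
    constructor <;> nlinarith
  · rw [rhs1_eq]
    obtain ⟨h1, h2⟩ := hb0 1 (Or.inr rfl)
    obtain ⟨h3, h4⟩ := hmub 1 s hs
    obtain ⟨h5, h6⟩ := hchi 1
    rw [abs_le]
    constructor <;> nlinarith
  · rw [rhs2_eq]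
    obtain ⟨h1, h2⟩ := hb1 2 (Or.inl rfl)
    obtain ⟨h3, h4⟩ := hmub 1 s hs
    obtain ⟨h5, h6⟩ := hmub 2 s hs
    rw [abs_le]
    constructor <;> nlinarith
  · rw [rhs3_eq]
    obtain ⟨h1, h2⟩ := hb1 3 (Or.inr rfl)
    obtain ⟨h3, h4⟩ := hmub 1 s hs
    obtain ⟨h5, h6⟩ := hmub 3 s hs
    rw [abs_le]
    constructor <;> nlinarith

lemma rhs_integrable (ρmax : exampleNetwork.E → ℝ) (hρmax : ∀ e, 0 < ρmax e)
    (μ : exampleNetwork.E → ℝ → ℝ) (hμ : exampleNetwork.IsFlowFunctions ρmax μ)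
    (hfmax : exampleNetwork.HasMaxFlowCapacities ρmax μ ![3, 1.5, 0.75, 0.75])
    (G : Fin (exampleNetwork.n + 1) → (exampleNetwork.E → ℝ) → exampleNetwork.E → ℝ)
    (hG : exampleNetwork.IsLocallyResponsive ρmax G)
    (μt : exampleNetwork.E → ℝ → ℝ)
    (hadm : exampleNetwork.IsAdmissiblePerturbation ρmax μ μt)
    (ρ : ℝ → exampleNetwork.E → ℝ)
    (hsol : exampleNetwork.IsSolution ρmax μt G 2 ρ) :
    ∀ (e : exampleNetwork.E) (t : ℝ), 0 ≤ t →
      IntervalIntegrable (fun s => exampleNetwork.rhs ρmax μt G 2 ρ s e) volume 0 t := by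
  have hst : ∀ t, 0 ≤ t → ∀ e, ρ t e ∈ Icc 0 (ρmax e) := fun t ht e => hsol.1 t ht e
  set ν := volume.restrict (Ioi (0:ℝ)) with hν
  have hcoord : ∀ e, AEMeasurable (fun s => ρ s e) ν := fun e =>
    primitive_aemeas _ (ρ 0 e) _ (fun t ht => hsol.2 e t ht)
  have hpi : AEMeasurable ρ ν := aemeas_pi hcoord
  have hρb : Measurable (hpi.mk ρ) := hpi.measurable_mk
  have hbc : ∀ e, Measurable (fun s => hpi.mk ρ s e) := fun e =>
    (measurable_pi_apply e).comp hρb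
  have hgood : ∀ᵐ s ∂ν, ρ s = hpi.mk ρ s ∧ 0 < s :=
    hpi.ae_eq_mk.and (ae_restrict_mem measurableSet_Ioi)
  -- ae-measurability of perturbed flows along the solution
  have hmu_ae : ∀ e, AEMeasurable (fun s => μt e (ρ s e)) ν := by
    intro e
    have hAm : MeasurableSet {s : ℝ | hpi.mk ρ s e < ρmax e} :=
      measurableSet_lt (hbc e) measurable_const
    refine aemeas_glue hAm ?_ ?_
    · have hcont : ContinuousOn (μt e) (Ico 0 (ρmax e)) := (hadm.1 e).2.1.continuousOn
      have hf : AEMeasurable (fun s => hpi.mk ρ s e) (ν.restrict {s | hpi.mk ρ s e < ρmax e}) :=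
        (hbc e).aemeasurable
      have hmem : ∀ᵐ s ∂(ν.restrict {s | hpi.mk ρ s e < ρmax e}),
          hpi.mk ρ s e ∈ Ico 0 (ρmax e) := by
        filter_upwards [ae_restrict_mem hAm, ae_restrict_of_ae hgood] with s hsA hsg
        exact ⟨by rw [← hsg.1]; exact (hst s hsg.2.le e).1, hsA⟩
      refine (contOn_comp_aemeas hcont measurableSet_Ico hf hmem).congr ?_
      filter_upwards [ae_restrict_of_ae hgood] with s hsg
      show μt e (AEMeasurable.mk ρ hpi s e) = μt e (ρ s e)
      rw [hsg.1]
    · refine (aemeasurable_const (b := (0:ℝ))).congr ?_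
      filter_upwards [ae_restrict_mem hAm.compl, ae_restrict_of_ae hgood] with s hsA hsg
      have h2 : ¬ hpi.mk ρ s e < ρmax e := hsA
      rw [← hsg.1] at h2
      have h1 : ρ s e = ρmax e := le_antisymm (hst s hsg.2.le e).2 (not_lt.1 h2)
      show (0:ℝ) = μt e (ρ s e)
      rw [h1, (hadm.1 e).2.2.2.2]
  -- ae-measurability of the node activation indicators
  have hchi0_ae : AEMeasurable (fun s => exampleNetwork.chi ρmax ρ s 0) ν := by
    have hm : Measurable (fun s =>
        if hpi.mk ρ s 0 < ρmax 0 ∨ hpi.mk ρ s 1 < ρmax 1 then (1:ℝ) else 0) :=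
      Measurable.ite ((measurableSet_lt (hbc 0) measurable_const).union
        (measurableSet_lt (hbc 1) measurable_const)) measurable_const measurable_const
    refine hm.aemeasurable.congr ?_
    filter_upwards [hgood] with s hsg
    rw [← hsg.1, chi0_eq]
  have hchi1_ae : AEMeasurable (fun s => exampleNetwork.chi ρmax ρ s 1) ν := by
    have hm : Measurable (fun s =>
        if hpi.mk ρ s 2 < ρmax 2 ∨ hpi.mk ρ s 3 < ρmax 3 then (1:ℝ) else 0) :=
      Measurable.ite ((measurableSet_lt (hbc 2) measurable_const).union
        (measurableSet_lt (hbc 3) measurable_const)) measurable_const measurable_const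
    refine hm.aemeasurable.congr ?_
    filter_upwards [hgood] with s hsg
    rw [← hsg.1, chi1_eq]
  -- ae-measurability of the χ·G products
  have hcg : ∀ (v : Fin 3), v ≠ exampleNetwork.destination → ∀ (a b e : exampleNetwork.E),
      exampleNetwork.outLinks v = {a, b} → a ≠ b → (e = a ∨ e = b) →
      (∀ s : ℝ, exampleNetwork.chi ρmax ρ s v =
        if ρ s a < ρmax a ∨ ρ s b < ρmax b then 1 else 0) →
      AEMeasurable (fun s => exampleNetwork.chi ρmax ρ s v * G v (ρ s) e) ν := by
    intro v hv a b e hout hab he hchieq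
    have hCm : MeasurableSet {s : ℝ | hpi.mk ρ s a < ρmax a ∧ hpi.mk ρ s b < ρmax b} :=
      (measurableSet_lt (hbc a) measurable_const).inter
        (measurableSet_lt (hbc b) measurable_const)
    have hγ : MeasurableSet (exampleNetwork.gammaV ρmax v) := by
      have hset : exampleNetwork.gammaV ρmax v =
          (fun x : exampleNetwork.E → ℝ => x a) ⁻¹' (Ico 0 (ρmax a)) ∩
          (fun x : exampleNetwork.E → ℝ => x b) ⁻¹' (Ico 0 (ρmax b)) := by
        ext x
        constructor
        · intro hx
          refine ⟨hx a ?_, hx b ?_⟩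
          · rw [hout]; exact Finset.mem_insert_self a _
          · rw [hout]; exact Finset.mem_insert_of_mem (Finset.mem_singleton_self b)
        · rintro ⟨h1, h2⟩ e' he'
          rw [hout, Finset.mem_insert, Finset.mem_singleton] at he'
          rcases he' with he' | he'
          · rw [he']; exact h1
          · rw [he']; exact h2
      rw [hset]
      exact ((measurable_pi_apply a) measurableSet_Ico).inter
        ((measurable_pi_apply b) measurableSet_Ico)
    have hΨae : AEMeasurable (fun s =>
        if hpi.mk ρ s a < ρmax a ∧ hpi.mk ρ s b < ρmax b then G v (hpi.mk ρ s) e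
        else (if hpi.mk ρ s e < ρmax e then (1:ℝ) else 0)) ν := by
      refine aemeas_glue hCm ?_ ?_
      · have hcontG : ContinuousOn (fun x => G v x e) (exampleNetwork.gammaV ρmax v) :=
          ((hG v hv).2.2.1 e).continuousOn
        have hf : AEMeasurable (hpi.mk ρ)
            (ν.restrict {s | hpi.mk ρ s a < ρmax a ∧ hpi.mk ρ s b < ρmax b}) :=
          hρb.aemeasurable
        have hmem : ∀ᵐ s ∂(ν.restrict {s | hpi.mk ρ s a < ρmax a ∧ hpi.mk ρ s b < ρmax b}),
            hpi.mk ρ s ∈ exampleNetwork.gammaV ρmax v := by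
          filter_upwards [ae_restrict_mem hCm, ae_restrict_of_ae hgood] with s hsC hsg
          intro e' he'
          rw [hout, Finset.mem_insert, Finset.mem_singleton] at he'
          rcases he' with he' | he'
          · rw [he']; exact ⟨by rw [← hsg.1]; exact (hst s hsg.2.le a).1, hsC.1⟩
          · rw [he']; exact ⟨by rw [← hsg.1]; exact (hst s hsg.2.le b).1, hsC.2⟩
        refine (contOn_comp_aemeas hcontG hγ hf hmem).congr ?_
        filter_upwards [ae_restrict_mem hCm] with s hsC
        exact (if_pos hsC).symm
      · have hm2 : Measurable (fun s => if hpi.mk ρ s e < ρmax e then (1:ℝ) else 0) :=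
          Measurable.ite (measurableSet_lt (hbc e) measurable_const)
            measurable_const measurable_const
        refine hm2.aemeasurable.congr ?_
        filter_upwards [ae_restrict_mem hCm.compl] with s hsC
        exact (if_neg hsC).symm
    refine hΨae.congr ?_
    filter_upwards [hgood] with s hsg
    obtain ⟨hseq, hspos⟩ := hsg
    have hsc : ∀ e', ρ s e' ∈ Icc 0 (ρmax e') := hst s hspos.le
    rw [← hseq]
    by_cases hca : ρ s a < ρmax a <;> by_cases hcb : ρ s b < ρmax b
    · rw [if_pos ⟨hca, hcb⟩, hchieq s, if_pos (Or.inl hca), one_mul]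
    · have hbe : ρ s b = ρmax b := le_antisymm (hsc b).2 (not_lt.1 hcb)
      have hcond : ¬(ρ s a < ρmax a ∧ ρ s b < ρmax b) := fun h => hcb h.2
      rw [if_neg hcond, hchieq s, if_pos (Or.inl hca), one_mul]
      obtain ⟨h1, h0⟩ := Gpartial ρmax G hG v hv a b hout hab (ρ s) (hsc a).1 hca hbe
      rcases he with rfl | rfl
      · rw [if_pos hca, h1]
      · rw [if_neg hcb, h0]
    · have hae' : ρ s a = ρmax a := le_antisymm (hsc a).2 (not_lt.1 hca)
      have hcond : ¬(ρ s a < ρmax a ∧ ρ s b < ρmax b) := fun h => hca h.1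
      have hout' : exampleNetwork.outLinks v = {b, a} := by rw [hout, Finset.pair_comm]
      rw [if_neg hcond, hchieq s, if_pos (Or.inr hcb), one_mul]
      obtain ⟨h1, h0⟩ := Gpartial ρmax G hG v hv b a hout' hab.symm (ρ s) (hsc b).1 hcb hae'
      rcases he with rfl | rfl
      · rw [if_neg hca, h0]
      · rw [if_pos hcb, h1]
    · have hcond : ¬(ρ s a < ρmax a ∧ ρ s b < ρmax b) := fun h => hca h.1
      have hcond2 : ¬(ρ s a < ρmax a ∨ ρ s b < ρmax b) := by
        push_neg
        exact ⟨not_lt.1 hca, not_lt.1 hcb⟩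
      rw [if_neg hcond, hchieq s, if_neg hcond2, zero_mul]
      rcases he with rfl | rfl
      · rw [if_neg hca]
      · rw [if_neg hcb]
  have h00 := hcg 0 node0_ne_dest 0 1 0 net_out0 (by decide) (Or.inl rfl) (chi0_eq ρmax ρ)
  have h01 := hcg 0 node0_ne_dest 0 1 1 net_out0 (by decide) (Or.inr rfl) (chi0_eq ρmax ρ)
  have h12 := hcg 1 node1_ne_dest 2 3 2 net_out1 (by decide) (Or.inl rfl) (chi1_eq ρmax ρ)
  have h13 := hcg 1 node1_ne_dest 2 3 3 net_out1 (by decide) (Or.inr rfl) (chi1_eq ρmax ρ)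
  have hae : ∀ e, AEMeasurable (fun s => exampleNetwork.rhs ρmax μt G 2 ρ s e) ν := by
    intro e
    have he : e = 0 ∨ e = 1 ∨ e = 2 ∨ e = 3 := by revert e; decide
    rcases he with rfl | rfl | rfl | rfl
    · refine ((h00.mul_const 2).sub (hmu_ae 0)).congr ?_
      refine Filter.Eventually.of_forall (fun s => ?_)
      simp only [Pi.sub_apply, Pi.mul_apply]
      rw [rhs0_eq]; ring!
    · refine ((h01.mul_const 2).sub (hchi1_ae.mul (hmu_ae 1))).congr ?_
      refine Filter.Eventually.of_forall (fun s => ?_)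
      simp only [Pi.sub_apply, Pi.mul_apply]
      rw [rhs1_eq]; ring!
    · refine (((hmu_ae 1).mul h12).sub (hmu_ae 2)).congr ?_
      refine Filter.Eventually.of_forall (fun s => ?_)
      simp only [Pi.sub_apply, Pi.mul_apply]
      rw [rhs2_eq]; ring!
    · refine (((hmu_ae 1).mul h13).sub (hmu_ae 3)).congr ?_
      refine Filter.Eventually.of_forall (fun s => ?_)
      simp only [Pi.sub_apply, Pi.mul_apply]
      rw [rhs3_eq]; ring!
  intro e t ht
  rw [intervalIntegrable_iff_integrableOn_Ioc_of_le ht]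
  haveI : IsFiniteMeasure (volume.restrict (Ioc (0:ℝ) t)) :=
    ⟨by rw [Measure.restrict_apply_univ]; exact measure_Ioc_lt_top⟩
  refine ⟨((hae e).mono_measure
      (Measure.restrict_mono Ioc_subset_Ioi_self le_rfl)).aestronglyMeasurable, ?_⟩
  refine MeasureTheory.HasFiniteIntegral.of_bounded (C := 6) ?_
  filter_upwards [ae_restrict_mem measurableSet_Ioc] with s hs
  rw [Real.norm_eq_abs]
  exact rhs_bound ρmax hρmax μ hμ hfmax G hG μt hadm ρ hst e s hs.1.le

lemma rho_contOn (ρmax : exampleNetwork.E → ℝ) (μt : exampleNetwork.E → ℝ → ℝ)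
    (G : Fin (exampleNetwork.n + 1) → (exampleNetwork.E → ℝ) → exampleNetwork.E → ℝ)
    (ρ : ℝ → exampleNetwork.E → ℝ)
    (hsol : exampleNetwork.IsSolution ρmax μt G 2 ρ)
    (hInt : ∀ (e : exampleNetwork.E) (t : ℝ), 0 ≤ t →
      IntervalIntegrable (fun s => exampleNetwork.rhs ρmax μt G 2 ρ s e) volume 0 t) :
    ∀ e, ContinuousOn (fun t => ρ t e) (Ici 0) := by
  intro e
  have hprim : ContinuousOn
      (fun t => ∫ s in (0:ℝ)..t, exampleNetwork.rhs ρmax μt G 2 ρ s e) (Ici 0) :=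
    primitive_contOn (fun t ht => ht) (fun t ht => hInt e t ht)
  exact (continuousOn_const.add hprim).congr (fun t ht => hsol.2 e t ht)

lemma no_saturation (ρmax : exampleNetwork.E → ℝ) (hρmax : ∀ e, 0 < ρmax e)
    (μ : exampleNetwork.E → ℝ → ℝ) (hμ : exampleNetwork.IsFlowFunctions ρmax μ)
    (hfmax : exampleNetwork.HasMaxFlowCapacities ρmax μ ![3, 1.5, 0.75, 0.75])
    (G : Fin (exampleNetwork.n + 1) → (exampleNetwork.E → ℝ) → exampleNetwork.E → ℝ)
    (hG : exampleNetwork.IsLocallyResponsive ρmax G)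
    (ρ0 : exampleNetwork.E → ℝ) (hρ0 : exampleNetwork.IsEquilibriumDensity ρmax μ G 2 ρ0)
    (hflow : ∀ e, μ e (ρ0 e) = ![1, 1, 0.5, 0.5] e)
    (μt : exampleNetwork.E → ℝ → ℝ)
    (hadm : exampleNetwork.IsAdmissiblePerturbation ρmax μ μt)
    (hmag : exampleNetwork.perturbationMagnitude ρmax μ μt ≤ 0.6)
    (ρ : ℝ → exampleNetwork.E → ℝ)
    (hsol : exampleNetwork.IsSolution ρmax μt G 2 ρ)
    (hinit : ∀ e, ρ 0 e = ρ0 e) :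
    ∀ t, 0 ≤ t → ρ t 0 < ρmax 0 := by
  have hst : ∀ t, 0 ≤ t → ∀ e, ρ t e ∈ Icc 0 (ρmax e) := fun t ht e => hsol.1 t ht e
  have hInt := rhs_integrable ρmax hρmax μ hμ hfmax G hG μt hadm ρ hsol
  have hcont := rho_contOn ρmax μt G ρ hsol hInt
  have hsmall := pert_small ρmax hρmax μ hμ hfmax μt hadm hmag
  -- choose a threshold x₀ below ρmax 0 where μ 0 exceeds 2.9
  have h3 : (![(3:ℝ), 1.5, 0.75, 0.75] : exampleNetwork.E → ℝ) 0 = 3 := rfl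
  have hlim : Tendsto (μ 0) (𝓝[<] (ρmax 0)) (𝓝 3) := by
    have := hfmax 0; exact this
  have hne : (𝓝[<] (ρmax 0)).NeBot := nhdsLT_neBot _
  have hev1 : ∀ᶠ y in 𝓝[<] (ρmax 0), (2.9:ℝ) < μ 0 y :=
    hlim.eventually (eventually_gt_nhds (by norm_num))
  have hρ00 : ρ0 0 < ρmax 0 := (hρ0.1 0).2
  have hev2 : ∀ᶠ y in 𝓝[<] (ρmax 0), y ∈ Ioo (ρ0 0) (ρmax 0) :=
    Ioo_mem_nhdsLT_of_mem ⟨hρ00, le_rfl⟩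
  obtain ⟨x₀, hx₀1, hx₀2⟩ := (hev1.and hev2).exists
  have hx₀0 : 0 ≤ x₀ := (hρ0.1 0).1.trans hx₀2.1.le
  have hmono := (hμ 0).2.2.1
  have hbig : ∀ y, x₀ ≤ y → y < ρmax 0 → (2.3:ℝ) ≤ μt 0 y := by
    intro y hy1 hy2
    have hyIcc : y ∈ Icc 0 (ρmax 0) := ⟨hx₀0.trans hy1, hy2.le⟩
    have h1 : μ 0 x₀ ≤ μ 0 y :=
      (hmono.monotoneOn) ⟨hx₀0, hx₀2.2⟩ ⟨hyIcc.1, hy2⟩ hy1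
    have h2 := hsmall 0 y hyIcc
    linarith
  intro t ht
  by_contra hcon
  have hteq : ρ t 0 = ρmax 0 := le_antisymm (hst t ht 0).2 (not_lt.1 hcon)
  set SS := {u : ℝ | 0 ≤ u ∧ ρ u 0 = ρmax 0} with hSSdef
  have hSSne : SS.Nonempty := ⟨t, ht, hteq⟩
  have hSSbdd : BddBelow SS := ⟨0, fun u hu => hu.1⟩
  have hSScl : IsClosed SS := by
    have hSS2 : SS = Ici 0 ∩ (fun u => ρ u 0) ⁻¹' {ρmax 0} := by
      ext u
      constructor
      · intro hu; exact ⟨hu.1, hu.2⟩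
      · intro hu; exact ⟨hu.1, hu.2⟩
    rw [hSS2]
    exact (hcont 0).preimage_isClosed_of_isClosed isClosed_Ici isClosed_singleton
  have hT : sInf SS ∈ SS := hSScl.csInf_mem hSSne hSSbdd
  set T := sInf SS
  have hT0 : 0 ≤ T := hT.1
  have hTeq : ρ T 0 = ρmax 0 := hT.2
  have hinit0 : ρ 0 0 = ρ0 0 := hinit 0
  have hTlt : ∀ u, 0 ≤ u → u < T → ρ u 0 < ρmax 0 := by
    intro u hu0 huT
    rcases lt_or_eq_of_le (hst u hu0 0).2 with h | h
    · exact h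
    · exact absurd (csInf_le hSSbdd ⟨hu0, h⟩) (not_le.2 huT)
  set S2 := {u : ℝ | u ∈ Icc 0 T ∧ ρ u 0 ≤ x₀} with hS2def
  have hS2ne : S2.Nonempty := ⟨0, ⟨le_rfl, hT0⟩, by rw [hinit0]; exact hx₀2.1.le⟩
  have hS2bdd : BddAbove S2 := ⟨T, fun u hu => hu.1.2⟩
  have hS2cl : IsClosed S2 := by
    have hS22 : S2 = Icc 0 T ∩ (fun u => ρ u 0) ⁻¹' (Iic x₀) := by
      ext u
      constructor
      · intro hu; exact ⟨hu.1, hu.2⟩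
      · intro hu; exact ⟨hu.1, hu.2⟩
    rw [hS22]
    exact ((hcont 0).mono Icc_subset_Ici_self).preimage_isClosed_of_isClosed
      isClosed_Icc isClosed_Iic
  have hT' : sSup S2 ∈ S2 := hS2cl.csSup_mem hS2ne hS2bdd
  set T' := sSup S2
  have hT'0 : 0 ≤ T' := hT'.1.1
  have hT'T : T' ≤ T := hT'.1.2
  have hT'lt : T' < T := by
    rcases lt_or_eq_of_le hT'T with h | h
    · exact h
    · exfalso
      have h2 := hT'.2
      rw [h, hTeq] at h2
      linarith [hx₀2.2]
  have hmid : ∀ u, T' < u → u ≤ T → x₀ < ρ u 0 := by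
    intro u h1 h2
    by_contra hc
    have hu : u ∈ S2 := ⟨⟨hT'0.trans h1.le, h2⟩, not_lt.1 hc⟩
    exact absurd (le_csSup hS2bdd hu) (not_le.2 h1)
  have hint1 : IntervalIntegrable (fun s => exampleNetwork.rhs ρmax μt G 2 ρ s 0)
      volume T' T := by
    refine (hInt 0 T hT0).mono_set ?_
    rw [uIcc_of_le hT'lt.le, uIcc_of_le hT0]
    exact Icc_subset_Icc hT'0 le_rfl
  have hadd := intervalIntegral.integral_add_adjacent_intervals (hInt 0 T' hT'0) hint1
  have hrepT := hsol.2 0 T hT0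
  have hrepT' := hsol.2 0 T' hT'0
  have haebd : (fun s => exampleNetwork.rhs ρmax μt G 2 ρ s 0)
      ≤ᵐ[volume.restrict (Icc T' T)] (fun _ => (-0.3:ℝ)) := by
    have h1 : ∀ᵐ s ∂(volume.restrict (Icc T' T)), s ∈ Icc T' T :=
      ae_restrict_mem measurableSet_Icc
    have h2 : ∀ᵐ s ∂(volume.restrict (Icc T' T)), s ≠ T' := by
      refine ae_restrict_of_ae ?_
      have hset : {s : ℝ | ¬ s ≠ T'} = {T'} := by ext u; simp
      rw [ae_iff, hset]
      exact measure_singleton T'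
    have h3 : ∀ᵐ s ∂(volume.restrict (Icc T' T)), s ≠ T := by
      refine ae_restrict_of_ae ?_
      have hset : {s : ℝ | ¬ s ≠ T} = {T} := by ext u; simp
      rw [ae_iff, hset]
      exact measure_singleton T
    filter_upwards [h1, h2, h3] with s hs hs1 hs2
    have hsT' : T' < s := lt_of_le_of_ne hs.1 (Ne.symm hs1)
    have hsT : s < T := lt_of_le_of_ne hs.2 hs2
    have hs0 : 0 ≤ s := hT'0.trans hs.1
    have hx : x₀ < ρ s 0 := hmid s hsT' hsT.le
    have hlt : ρ s 0 < ρmax 0 := hTlt s hs0 hsT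
    have hμtb : (2.3:ℝ) ≤ μt 0 (ρ s 0) := hbig (ρ s 0) hx.le hlt
    obtain ⟨hg0, hg1⟩ := chiG_bound ρmax G hG ρ 0 node0_ne_dest 0 1 0 net_out0
      (by decide) (Or.inl rfl) (chi0_eq ρmax ρ) s (hst s hs0)
    rw [rhs0_eq]
    have hre : exampleNetwork.chi ρmax ρ s 0 * 2 * G 0 (ρ s) 0 =
        2 * (exampleNetwork.chi ρmax ρ s 0 * G 0 (ρ s) 0) := by ring
    show exampleNetwork.chi ρmax ρ s 0 * 2 * G 0 (ρ s) 0 - μt 0 (ρ s 0) ≤ (-0.3:ℝ)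
    rw [hre]
    have hg1' : exampleNetwork.chi ρmax ρ s 0 * G 0 (ρ s) 0 ≤ 1 := hg1
    linarith
  have hmono_int := intervalIntegral.integral_mono_ae_restrict hT'lt.le hint1
    intervalIntegrable_const haebd
  rw [intervalIntegral.integral_const, smul_eq_mul] at hmono_int
  have h5 : ρ T 0 - ρ T' 0 = ∫ s in T'..T, exampleNetwork.rhs ρmax μt G 2 ρ s 0 := by
    rw [hrepT, hrepT']
    linarith [hadd]
  have h6 := hT'.2
  rw [hTeq] at h5
  nlinarith [hx₀2.2, hT'lt]

theorem key_transfer (ρmax : exampleNetwork.E → ℝ) (hρmax : ∀ e, 0 < ρmax e)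
    (μ : exampleNetwork.E → ℝ → ℝ) (hμ : exampleNetwork.IsFlowFunctions ρmax μ)
    (hfmax : exampleNetwork.HasMaxFlowCapacities ρmax μ ![3, 1.5, 0.75, 0.75])
    (G : Fin (exampleNetwork.n + 1) → (exampleNetwork.E → ℝ) → exampleNetwork.E → ℝ)
    (hG : exampleNetwork.IsLocallyResponsive ρmax G)
    (ρ0 : exampleNetwork.E → ℝ) (hρ0 : exampleNetwork.IsEquilibriumDensity ρmax μ G 2 ρ0)
    (hflow : ∀ e, μ e (ρ0 e) = ![1, 1, 0.5, 0.5] e)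
    (μt : exampleNetwork.E → ℝ → ℝ)
    (hadm : exampleNetwork.IsAdmissiblePerturbation ρmax μ μt)
    (hmag : exampleNetwork.perturbationMagnitude ρmax μ μt ≤ 0.6)
    (ρ : ℝ → exampleNetwork.E → ℝ)
    (hsol : exampleNetwork.IsSolution ρmax μt G 2 ρ)
    (hinit : ∀ e, ρ 0 e = ρ0 e) :
    exampleNetwork.Transferring μt 2 ρ := by
  have hst : ∀ t, 0 ≤ t → ∀ e, ρ t e ∈ Icc 0 (ρmax e) := fun t ht e => hsol.1 t ht e
  have hInt := rhs_integrable ρmax hρmax μ hμ hfmax G hG μt hadm ρ hsol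
  have hno := no_saturation ρmax hρmax μ hμ hfmax G hG ρ0 hρ0 hflow μt hadm hmag ρ hsol hinit
  have hchi0_one : ∀ s, 0 ≤ s → exampleNetwork.chi ρmax ρ s 0 = 1 := by
    intro s hs
    rw [chi0_eq, if_pos (Or.inl (hno s hs))]
  have hsum : ∀ s, 0 ≤ s →
      exampleNetwork.nodeInflow μt 2 ρ s exampleNetwork.destination =
        2 - ∑ e : exampleNetwork.E, exampleNetwork.rhs ρmax μt G 2 ρ s e := by
    intro s hs
    have hin : exampleNetwork.inLinks exampleNetwork.destination =
        ({0, 2, 3} : Finset exampleNetwork.E) := by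
      rw [net_dest]; exact net_in2
    have hdst : exampleNetwork.nodeInflow μt 2 ρ s exampleNetwork.destination =
        μt 0 (ρ s 0) + (μt 2 (ρ s 2) + μt 3 (ρ s 3)) := by
      rw [FlowNetwork.nodeInflow, if_neg (by rw [net_dest, net_origin]; decide), hin]
      rw [Finset.sum_insert (by decide), Finset.sum_pair (by decide : (2:exampleNetwork.E) ≠ 3)]
    have h4 : ∑ e : exampleNetwork.E, exampleNetwork.rhs ρmax μt G 2 ρ s e =
        (exampleNetwork.chi ρmax ρ s 0 * 2 * G 0 (ρ s) 0 - μt 0 (ρ s 0))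
        + (exampleNetwork.chi ρmax ρ s 0 * 2 * G 0 (ρ s) 1
            - exampleNetwork.chi ρmax ρ s 1 * μt 1 (ρ s 1))
        + (exampleNetwork.chi ρmax ρ s 1 * μt 1 (ρ s 1) * G 1 (ρ s) 2 - μt 2 (ρ s 2))
        + (exampleNetwork.chi ρmax ρ s 1 * μt 1 (ρ s 1) * G 1 (ρ s) 3 - μt 3 (ρ s 3)) := by
      rw [show (∑ e : exampleNetwork.E, exampleNetwork.rhs ρmax μt G 2 ρ s e)
          = ∑ e : Fin 4, exampleNetwork.rhs ρmax μt G 2 ρ s e from rfl]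
      erw [Fin.sum_univ_four]
      erw [rhs0_eq, rhs1_eq, rhs2_eq, rhs3_eq]
    obtain ⟨hg0a, hg0b, hg0sum⟩ := Gbound ρmax G hG 0 node0_ne_dest 0 1 net_out0
      (by decide) (ρ s) (hst s hs) (Or.inl (hno s hs))
    rw [hdst, h4, hchi0_one s hs]
    by_cases hc1 : ρ s 2 < ρmax 2 ∨ ρ s 3 < ρmax 3
    · have hchi1 : exampleNetwork.chi ρmax ρ s 1 = 1 := by rw [chi1_eq, if_pos hc1]
      obtain ⟨_, _, hg1sum⟩ := Gbound ρmax G hG 1 node1_ne_dest 2 3 net_out1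
        (by decide) (ρ s) (hst s hs) hc1
      rw [hchi1]
      linear_combination (norm := ring!) (2:ℝ) * hg0sum + μt 1 (ρ s 1) * hg1sum
    · have hchi1 : exampleNetwork.chi ρmax ρ s 1 = 0 := by rw [chi1_eq, if_neg hc1]
      rw [hchi1]
      linear_combination (norm := ring!) (2:ℝ) * hg0sum
  have hkey : ∀ t, 0 ≤ t →
      (∫ s in (0:ℝ)..t, exampleNetwork.nodeInflow μt 2 ρ s exampleNetwork.destination)
        = 2*t - ∑ e : exampleNetwork.E, (ρ t e - ρ 0 e) := by
    intro t ht
    have hcongr : EqOn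
        (fun s => exampleNetwork.nodeInflow μt 2 ρ s exampleNetwork.destination)
        (fun s => 2 - ∑ e : exampleNetwork.E, exampleNetwork.rhs ρmax μt G 2 ρ s e)
        (uIcc 0 t) := by
      intro s hs
      rw [uIcc_of_le ht] at hs
      exact hsum s hs.1
    rw [intervalIntegral.integral_congr hcongr]
    have hintsum : IntervalIntegrable
        (fun s => ∑ e : exampleNetwork.E, exampleNetwork.rhs ρmax μt G 2 ρ s e)
        volume 0 t := by
      have h1 := IntervalIntegrable.sum Finset.univ
        (f := fun (e : exampleNetwork.E) => fun s => exampleNetwork.rhs ρmax μt G 2 ρ s e)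
        (fun e _ => hInt e t ht)
      have h2 : (∑ e : exampleNetwork.E, fun s => exampleNetwork.rhs ρmax μt G 2 ρ s e)
          = fun s => ∑ e : exampleNetwork.E, exampleNetwork.rhs ρmax μt G 2 ρ s e := by
        funext s
        simp [Finset.sum_apply]
      rwa [h2] at h1
    rw [intervalIntegral.integral_sub intervalIntegrable_const hintsum,
      intervalIntegral.integral_const,
      intervalIntegral.integral_finset_sum (fun e _ => hInt e t ht)]
    have hper : ∀ e : exampleNetwork.E,
        (∫ s in (0:ℝ)..t, exampleNetwork.rhs ρmax μt G 2 ρ s e) = ρ t e - ρ 0 e := by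
      intro e
      have := hsol.2 e t ht
      linarith
    rw [Finset.sum_congr rfl (fun e _ => hper e), smul_eq_mul]
    ring
  have hMbd : ∀ t, 0 ≤ t → |∑ e : exampleNetwork.E, (ρ t e - ρ 0 e)|
      ≤ ∑ e : exampleNetwork.E, ρmax e := by
    intro t ht
    refine (Finset.abs_sum_le_sum_abs _ _).trans ?_
    refine Finset.sum_le_sum (fun e _ => ?_)
    have h1 := hst t ht e
    have h2 := hst 0 le_rfl e
    rw [abs_le]
    constructor <;> [linarith [h1.1, h2.2]; linarith [h1.2, h2.1]]
  have h0 : Tendsto (fun t : ℝ => (∑ e : exampleNetwork.E, (ρ t e - ρ 0 e)) / t)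
      atTop (𝓝 0) := by
    refine squeeze_zero_norm' ?_
      (tendsto_const_nhds.div_atTop (tendsto_id (α := ℝ)) :
        Tendsto (fun t : ℝ => (∑ e : exampleNetwork.E, ρmax e) / t) atTop (𝓝 0))
    filter_upwards [eventually_ge_atTop (1:ℝ)] with t ht1
    have ht0 : (0:ℝ) < t := lt_of_lt_of_le one_pos ht1
    rw [Real.norm_eq_abs, abs_div, abs_of_pos ht0]
    gcongr
    exact hMbd t ht0.le
  have htend : Tendsto
      (fun t : ℝ => 2 - (∑ e : exampleNetwork.E, (ρ t e - ρ 0 e)) / t) atTop (𝓝 2) := by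
    have := (tendsto_const_nhds (x := (2:ℝ)) (f := (atTop : Filter ℝ))).sub h0
    simpa using this
  have heq : (fun t : ℝ => 2 - (∑ e : exampleNetwork.E, (ρ t e - ρ 0 e)) / t)
      =ᶠ[atTop] (fun t => (1 / t) *
        ∫ s in (0:ℝ)..t, exampleNetwork.nodeInflow μt 2 ρ s exampleNetwork.destination) := by
    filter_upwards [eventually_gt_atTop (0:ℝ)] with t ht
    rw [hkey t ht.le]
    field_simp
  exact htend.congr' heq

end Solution

/-- In the example network with `f^max = (3, 1.5, 0.75, 0.75)`, inflow `λ0 = 2` and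
equilibrium flows `f° = (1, 1, 0.5, 0.5)`, the minimal node residual capacity is
`R(f°) = 0.5`, yet every admissible perturbation of magnitude at most `0.6` leaves the
network transferring, so that `γ(ρ°) ≥ 0.6 > R(f°)`: with finite density capacities the
margin of resilience can strictly exceed the minimal node residual capacity. -/
theorem example_margin_exceeds_min_residual
    (ρmax : exampleNetwork.E → ℝ) (hρmax : ∀ e, 0 < ρmax e)
    (μ : exampleNetwork.E → ℝ → ℝ) (hμ : exampleNetwork.IsFlowFunctions ρmax μ)
    (hfmax : exampleNetwork.HasMaxFlowCapacities ρmax μ ![3, 1.5, 0.75, 0.75])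
    (G : Fin (exampleNetwork.n + 1) → (exampleNetwork.E → ℝ) → exampleNetwork.E → ℝ)
    (hG : exampleNetwork.IsLocallyResponsive ρmax G)
    (ρ0 : exampleNetwork.E → ℝ)
    (hρ0 : exampleNetwork.IsEquilibriumDensity ρmax μ G 2 ρ0)
    (hflow : ∀ e, μ e (ρ0 e) = ![1, 1, 0.5, 0.5] e) :
    exampleNetwork.minResidualCapacity ![3, 1.5, 0.75, 0.75] ![1, 1, 0.5, 0.5] = 0.5 ∧
    (∀ μt : exampleNetwork.E → ℝ → ℝ,
      exampleNetwork.IsAdmissiblePerturbation ρmax μ μt →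
      exampleNetwork.perturbationMagnitude ρmax μ μt ≤ 0.6 →
      ∀ ρ : ℝ → exampleNetwork.E → ℝ, exampleNetwork.IsSolution ρmax μt G 2 ρ →
        (∀ e, ρ 0 e = ρ0 e) → exampleNetwork.Transferring μt 2 ρ) ∧
    ENNReal.ofReal 0.6 ≤ exampleNetwork.marginOfResilience ρmax μ G 2 ρ0 := by
  refine ⟨resid_eq, ?_, ?_⟩
  · intro μt hadm hmag ρ hsol hinit
    exact key_transfer ρmax hρmax μ hμ hfmax G hG ρ0 hρ0 hflow μt hadm hmag ρ hsol hinit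
  · rw [FlowNetwork.marginOfResilience]
    refine le_sInf ?_
    rintro m ⟨μt, hadm, ⟨ρ, hsol, hinit, hnt⟩, rfl⟩
    have hgt : ¬ exampleNetwork.perturbationMagnitude ρmax μ μt ≤ 0.6 := by
      intro hle
      exact hnt (key_transfer ρmax hρmax μ hμ hfmax G hG ρ0 hρ0 hflow μt hadm hle ρ hsol hinit)
    exact ENNReal.ofReal_le_ofReal (not_le.1 hgt).le
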